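/- Let 0 < ε ≤ 1/8, let the input be ε-well-separated, and let π be a perfect matching with close-edge index set Cl, far-edge index set F, and C = Cl ∪ F. Let opt_close = min over bijections μ : Cl → Cl of ∑_{i ∈ Cl} |s(π(μ(i))) − r(i)|, and opt_cf = min over bijections μ : C → C of ∑_{i ∈ C} |s(π(μ(i))) − r(i)|. Then opt_close − 4εΔ·|F| ≤ opt_cf. -/

import Mathlib

open MeasureTheory Set

noncomputable def stp (x t : ℝ) : ℝ := if x ≤ t then 1 else 0

noncomputable def chi (x y t : ℝ) : ℝ := stp x t - stp y t

lemma chi_of_le {x y : ℝ} (h : x ≤ y) : chi x y = (Set.Ico x y).indicator 1 := by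
  funext t
  by_cases hx : x ≤ t <;> by_cases hy : y ≤ t
  · simp [chi, stp, hx, hy, Set.indicator_apply, Set.mem_Ico, not_lt.2 hy]
  · simp [chi, stp, hx, hy, Set.indicator_apply, Set.mem_Ico, not_le.1 hy]
  · exact absurd (h.trans hy) hx
  · simp [chi, stp, hx, hy, Set.indicator_apply, Set.mem_Ico]

lemma chi_swap (x y : ℝ) : chi x y = fun t => -(chi y x t) := by
  funext t; simp [chi]

lemma integrable_indicator_Ico (x y : ℝ) :
    Integrable ((Set.Ico x y).indicator (1 : ℝ → ℝ)) := by
  rw [integrable_indicator_iff measurableSet_Ico]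
  refine integrableOn_const ?_ (by simp)
  rw [Real.volume_Ico]; exact ENNReal.ofReal_ne_top

lemma integrable_indicator_Icc (x y : ℝ) :
    Integrable ((Set.Icc x y).indicator (1 : ℝ → ℝ)) := by
  rw [integrable_indicator_iff measurableSet_Icc]
  refine integrableOn_const ?_ (by simp)
  rw [Real.volume_Icc]; exact ENNReal.ofReal_ne_top

lemma integrable_chi (x y : ℝ) : Integrable (chi x y) := by
  rcases le_total x y with h | h
  · rw [chi_of_le h]; exact integrable_indicator_Ico x y
  · rw [chi_swap]
    have := integrable_indicator_Ico y x
    rw [← chi_of_le h] at this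
    exact this.neg

lemma integral_indicator_Icc (x y : ℝ) (h : x ≤ y) :
    ∫ t, (Set.Icc x y).indicator (1 : ℝ → ℝ) t = y - x := by
  rw [integral_indicator_one measurableSet_Icc,
    Real.volume_real_Icc_of_le h]

lemma integral_abs_chi (x y : ℝ) : ∫ t, |chi x y t| = |x - y| := by
  have key : ∀ u v : ℝ, u ≤ v → ∫ t, |chi u v t| = v - u := by
    intro u v h
    have h1 : ∀ t, |chi u v t| = (Set.Ico u v).indicator 1 t := by
      intro t
      rw [chi_of_le h]
      exact abs_of_nonneg (Set.indicator_nonneg (fun a _ => zero_le_one) t)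
    calc ∫ t, |chi u v t| = ∫ t, (Set.Ico u v).indicator 1 t := by
          exact congrArg _ (funext h1)
      _ = v - u := by
          rw [integral_indicator_one measurableSet_Ico,
            Real.volume_real_Ico_of_le h]
  rcases le_total x y with h | h
  · rw [key x y h, abs_sub_comm, abs_of_nonneg (by linarith)]
  · have h2 : (∫ t, |chi x y t|) = ∫ t, |chi y x t| := by
      refine congrArg _ (funext fun t => ?_)
      rw [chi_swap x y]; simp
    rw [h2, key y x h, abs_of_nonneg (by linarith)]

lemma abs_chi_le_one (x y t : ℝ) : |chi x y t| ≤ 1 := by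
  simp only [chi, stp]; split_ifs <;> norm_num

lemma chi_eq_zero {x y t : ℝ} (h : x ≤ t ↔ y ≤ t) : chi x y t = 0 := by
  simp only [chi, stp]
  by_cases hx : x ≤ t
  · simp [hx, h.1 hx]
  · by_cases hy : y ≤ t
    · exact absurd (h.2 hy) hx
    · simp [hx, hy]

lemma mono_sum_abs_chi {m : ℕ} {a b : Fin m → ℝ} (ha : Monotone a) (hb : Monotone b)
    (t : ℝ) : |∑ k, chi (a k) (b k) t| = ∑ k, |chi (a k) (b k) t| := by
  by_cases h : ∃ k, b k ≤ t ∧ ¬ a k ≤ t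
  · obtain ⟨k, hk1, hk2⟩ := h
    have hnp : ∀ j, chi (a j) (b j) t ≤ 0 := by
      intro j
      by_cases h1 : a j ≤ t <;> by_cases h2 : b j ≤ t <;>
        simp only [chi, stp, h1, h2, if_true, if_false] <;> try norm_num
      exfalso
      have hjk : j < k := lt_of_not_ge fun hkj => hk2 ((ha hkj).trans h1)
      have hkj : k < j := lt_of_not_ge fun hjk' => h2 ((hb hjk').trans hk1)
      exact absurd hjk (not_lt.2 hkj.le)
    rw [abs_of_nonpos (Finset.sum_nonpos fun j _ => hnp j), ← Finset.sum_neg_distrib]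
    exact Finset.sum_congr rfl fun j _ => (abs_of_nonpos (hnp j)).symm
  · push_neg at h
    have hnn : ∀ j, 0 ≤ chi (a j) (b j) t := by
      intro j
      by_cases h1 : a j ≤ t <;> by_cases h2 : b j ≤ t <;>
        simp only [chi, stp, h1, h2, if_true, if_false] <;> try norm_num
      exact absurd (h j h2) h1
    rw [abs_of_nonneg (Finset.sum_nonneg fun j _ => hnn j)]
    exact Finset.sum_congr rfl fun j _ => (abs_of_nonneg (hnn j)).symm

/-- `x` lies in the interval `I_L' = [−εΔ, εΔ]`. -/
abbrev inIL (ε Δ x : ℝ) : Prop := -(ε * Δ) ≤ x ∧ x ≤ ε * Δ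

/-- `x` lies in the interval `I_R' = [(1−ε)Δ, (1+ε)Δ]`. -/
abbrev inIR (ε Δ x : ℝ) : Prop := (1 - ε) * Δ ≤ x ∧ x ≤ (1 + ε) * Δ

/-- Index `i` is a close edge of the matching `π`. -/
abbrev isCloseEdge (n : ℕ) (s r : Fin n → ℝ) (ε Δ : ℝ) (π : Equiv.Perm (Fin n))
    (i : Fin n) : Prop :=
  (inIL ε Δ (s (π i)) ∧ inIL ε Δ (r i)) ∨ (inIR ε Δ (s (π i)) ∧ inIR ε Δ (r i))

/-- Index `i` is a far edge of the matching `π`. -/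
abbrev isFarEdge (n : ℕ) (s r : Fin n → ℝ) (ε Δ : ℝ) (π : Equiv.Perm (Fin n))
    (i : Fin n) : Prop :=
  (inIL ε Δ (s (π i)) ∧ inIR ε Δ (r i)) ∨ (inIR ε Δ (s (π i)) ∧ inIL ε Δ (r i))

/-- For an `ε`-well-separated input (with `0 < ε ≤ 1/8`) and a
perfect matching `π` with close index set `Cl` and far index set `F`, letting
`opt_close` be the minimum rematching cost of the close endpoints among
themselves and `opt_cf` the minimum rematching cost of the close-and-far
endpoints among themselves, one has `opt_close − 4εΔ·|F| ≤ opt_cf`. -/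
theorem opt_close_vs_opt_cf (n : ℕ) (hn : 1 ≤ n) (s r : Fin n → ℝ)
    (Δ ε : ℝ) (hΔ : 0 < Δ) (hε0 : 0 < ε) (hε : ε ≤ 1 / 8)
    (hsep_s : ∀ i, (-(ε * Δ) ≤ s i ∧ s i ≤ 0) ∨ (Δ ≤ s i ∧ s i ≤ (1 + ε) * Δ))
    (hsep_r : ∀ i, -(ε * Δ) ≤ r i ∧ r i ≤ (1 + ε) * Δ)
    (π : Equiv.Perm (Fin n)) :
    (⨅ μ : Equiv.Perm {i : Fin n // isCloseEdge n s r ε Δ π i},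
        ∑ i : {i : Fin n // isCloseEdge n s r ε Δ π i}, |s (π (μ i).1) - r i.1|) -
      4 * ε * Δ *
        ((Finset.univ.filter (fun i => isFarEdge n s r ε Δ π i)).card : ℝ) ≤
    ⨅ μ : Equiv.Perm {i : Fin n //
        isCloseEdge n s r ε Δ π i ∨ isFarEdge n s r ε Δ π i},
      ∑ i : {i : Fin n // isCloseEdge n s r ε Δ π i ∨ isFarEdge n s r ε Δ π i},
        |s (π (μ i).1) - r i.1| := by
  have hεΔ : 0 < ε * Δ := mul_pos hε0 hΔ
  set FS : Finset (Fin n) := Finset.univ.filter (fun i => isFarEdge n s r ε Δ π i) with hFS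
  set c : ℝ := (FS.card : ℝ) with hc
  have hc0 : 0 ≤ c := Nat.cast_nonneg _
  set ind1 : ℝ → ℝ := (Set.Icc (-(ε * Δ)) (ε * Δ)).indicator 1 with hind1
  set ind2 : ℝ → ℝ := (Set.Icc ((1 - ε) * Δ) ((1 + ε) * Δ)).indicator 1 with hind2
  set g1 : ℝ → ℝ := fun t => ∑ i : {i : Fin n // isCloseEdge n s r ε Δ π i},
      chi (s (π i.1)) (r i.1) t with hg1
  set g2 : ℝ → ℝ := fun t =>
      ∑ i : {i : Fin n // isCloseEdge n s r ε Δ π i ∨ isFarEdge n s r ε Δ π i},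
      chi (s (π i.1)) (r i.1) t with hg2
  have hg1i : Integrable g1 := integrable_finset_sum _ (fun i _ => integrable_chi _ _)
  have hg2i : Integrable g2 := integrable_finset_sum _ (fun i _ => integrable_chi _ _)
  -- disjointness of close and far
  have hdisj : ∀ i : Fin n, isCloseEdge n s r ε Δ π i → isFarEdge n s r ε Δ π i → False := by
    intro i hcl hfar
    have h1 : ε * Δ < (1 - ε) * Δ := by nlinarith
    rcases hcl with ⟨hS, hR⟩ | ⟨hS, hR⟩ <;> rcases hfar with ⟨hS', hR'⟩ | ⟨hS', hR'⟩ <;>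
      linarith [hS.1, hS.2, hR.1, hR.2, hS'.1, hS'.2, hR'.1, hR'.2]
  -- splitting sums over C into Cl and F
  have hsplit : ∀ f : Fin n → ℝ,
      (∑ i : {i : Fin n // isCloseEdge n s r ε Δ π i ∨ isFarEdge n s r ε Δ π i}, f i.1)
        = (∑ i : {i : Fin n // isCloseEdge n s r ε Δ π i}, f i.1) + ∑ i ∈ FS, f i := by
    intro f
    rw [← Finset.sum_subtype
        (Finset.univ.filter fun i => isCloseEdge n s r ε Δ π i ∨ isFarEdge n s r ε Δ π i)
        (by simp) f,
      ← Finset.sum_subtype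
        (Finset.univ.filter fun i => isCloseEdge n s r ε Δ π i) (by simp) f,
      Finset.filter_or, hFS]
    refine Finset.sum_union (Finset.disjoint_left.2 fun i hi1 hi2 => ?_)
    exact hdisj i (Finset.mem_filter.1 hi1).2 (Finset.mem_filter.1 hi2).2
  -- lower bound for any matching on C
  have hlow : ∀ μ : Equiv.Perm {i : Fin n //
        isCloseEdge n s r ε Δ π i ∨ isFarEdge n s r ε Δ π i},
      (∫ t, |g2 t|) ≤
      ∑ i : {i : Fin n // isCloseEdge n s r ε Δ π i ∨ isFarEdge n s r ε Δ π i},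
        |s (π (μ i).1) - r i.1| := by
    intro μ
    have hrw : ∀ t, g2 t = ∑ i : {i : Fin n //
        isCloseEdge n s r ε Δ π i ∨ isFarEdge n s r ε Δ π i},
        chi (s (π (μ i).1)) (r i.1) t := by
      intro t
      simp only [hg2, chi]
      rw [Finset.sum_sub_distrib, Finset.sum_sub_distrib]
      congr 1
      exact (Equiv.sum_comp μ fun i => stp (s (π i.1)) t).symm
    calc (∫ t, |g2 t|)
        = ∫ t, |∑ i : {i : Fin n //
            isCloseEdge n s r ε Δ π i ∨ isFarEdge n s r ε Δ π i},
            chi (s (π (μ i).1)) (r i.1) t| :=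
          congrArg _ (funext fun t => congrArg _ (hrw t))
      _ ≤ ∫ t, ∑ i : {i : Fin n //
            isCloseEdge n s r ε Δ π i ∨ isFarEdge n s r ε Δ π i},
            |chi (s (π (μ i).1)) (r i.1) t| := by
          refine integral_mono ?_ ?_ ?_
          · exact (integrable_finset_sum _ fun i _ => integrable_chi _ _).abs
          · exact integrable_finset_sum _ fun i _ => (integrable_chi _ _).abs
          · exact fun t => Finset.abs_sum_le_sum_abs _ _
      _ = ∑ i : {i : Fin n //
            isCloseEdge n s r ε Δ π i ∨ isFarEdge n s r ε Δ π i},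
            ∫ t, |chi (s (π (μ i).1)) (r i.1) t| :=
          integral_finset_sum _ fun i _ => (integrable_chi _ _).abs
      _ = _ := Finset.sum_congr rfl fun i _ => integral_abs_chi _ _
  -- the sorted matching on Cl achieves ∫ |g1|
  obtain ⟨ν, hν⟩ : ∃ ν : Equiv.Perm {i : Fin n // isCloseEdge n s r ε Δ π i},
      (∑ i : {i : Fin n // isCloseEdge n s r ε Δ π i}, |s (π (ν i).1) - r i.1|)
        = ∫ t, |g1 t| := by
    set Cl := {i : Fin n // isCloseEdge n s r ε Δ π i} with hCl
    set e : Fin (Fintype.card Cl) ≃ Cl := (Fintype.equivFin Cl).symm with he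
    set a : Fin (Fintype.card Cl) → ℝ := fun k => s (π (e k).1) with ha
    set b : Fin (Fintype.card Cl) → ℝ := fun k => r (e k).1 with hb
    set σ := Tuple.sort a with hσ
    set τ := Tuple.sort b with hτ
    have hma : Monotone (a ∘ σ) := Tuple.monotone_sort a
    have hmb : Monotone (b ∘ τ) := Tuple.monotone_sort b
    refine ⟨((e.symm.trans τ.symm).trans σ).trans e, ?_⟩
    have hre : (∑ i : Cl, |s (π ((((e.symm.trans τ.symm).trans σ).trans e) i).1) - r i.1|)
        = ∑ k, |a (σ k) - b (τ k)| := by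
      rw [← Equiv.sum_comp (τ.trans e)
        fun i => |s (π ((((e.symm.trans τ.symm).trans σ).trans e) i).1) - r i.1|]
      refine Finset.sum_congr rfl fun k _ => ?_
      simp [Equiv.trans_apply, Equiv.symm_apply_apply, ha, hb]
    have hgt : ∀ t, g1 t = ∑ k, chi (a (σ k)) (b (τ k)) t := by
      intro t
      simp only [hg1, chi]
      rw [Finset.sum_sub_distrib, Finset.sum_sub_distrib]
      congr 1
      · rw [← Equiv.sum_comp e fun i => stp (s (π i.1)) t]
        exact (Equiv.sum_comp σ fun k => stp (a k) t).symm
      · rw [← Equiv.sum_comp e fun i => stp (r i.1) t]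
        exact (Equiv.sum_comp τ fun k => stp (b k) t).symm
    rw [hre]
    calc (∑ k, |a (σ k) - b (τ k)|)
        = ∑ k, ∫ t, |chi (a (σ k)) (b (τ k)) t| :=
          Finset.sum_congr rfl fun k _ => (integral_abs_chi _ _).symm
      _ = ∫ t, ∑ k, |chi (a (σ k)) (b (τ k)) t| :=
          (integral_finset_sum _ fun k _ => (integrable_chi _ _).abs).symm
      _ = ∫ t, |∑ k, chi (a (σ k)) (b (τ k)) t| := by
          refine congrArg _ (funext fun t => ?_)
          have h := mono_sum_abs_chi hma hmb t
          simpa [Function.comp] using h.symm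
      _ = ∫ t, |g1 t| := congrArg _ (funext fun t => congrArg _ (hgt t).symm)
  -- pointwise key inequality
  have hkey : ∀ t, |g1 t| ≤ |g2 t| + c * (ind1 t + ind2 t) := by
    intro t
    have hsp := hsplit (fun i => chi (s (π i)) (r i) t)
    by_cases hU : t ∈ Set.Icc (-(ε * Δ)) (ε * Δ) ∨ t ∈ Set.Icc ((1 - ε) * Δ) ((1 + ε) * Δ)
    · have hn1 : (0:ℝ) ≤ ind1 t := Set.indicator_nonneg (fun _ _ => zero_le_one) t
      have hn2 : (0:ℝ) ≤ ind2 t := Set.indicator_nonneg (fun _ _ => zero_le_one) t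
      have hind : (1:ℝ) ≤ ind1 t + ind2 t := by
        rcases hU with h | h
        · have h1 : ind1 t = 1 := by rw [hind1]; simp [Set.indicator_of_mem h]
          linarith
        · have h1 : ind2 t = 1 := by rw [hind2]; simp [Set.indicator_of_mem h]
          linarith
      have hFb : |∑ i ∈ FS, chi (s (π i)) (r i) t| ≤ c := by
        refine le_trans (Finset.abs_sum_le_sum_abs _ _) ?_
        calc (∑ i ∈ FS, |chi (s (π i)) (r i) t|) ≤ ∑ _i ∈ FS, (1:ℝ) :=
              Finset.sum_le_sum fun i _ => abs_chi_le_one _ _ _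
          _ = c := by simp [hc]
      have habs : |g1 t| ≤ |g2 t| + |∑ i ∈ FS, chi (s (π i)) (r i) t| := by
        have h2 : g1 t = g2 t - ∑ i ∈ FS, chi (s (π i)) (r i) t := by
          have hg1t : g1 t = ∑ i : {i : Fin n // isCloseEdge n s r ε Δ π i},
              chi (s (π i.1)) (r i.1) t := rfl
          have hg2t : g2 t = ∑ i : {i : Fin n //
              isCloseEdge n s r ε Δ π i ∨ isFarEdge n s r ε Δ π i},
              chi (s (π i.1)) (r i.1) t := rfl
          rw [hg1t, hg2t, hsp]; ring
        rw [h2]; exact abs_sub _ _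
      have hmul : c * 1 ≤ c * (ind1 t + ind2 t) := mul_le_mul_of_nonneg_left hind hc0
      linarith
    · push_neg at hU
      obtain ⟨hU1, hU2⟩ := hU
      rw [Set.mem_Icc] at hU1 hU2
      push_neg at hU1 hU2
      have hz : g1 t = 0 := by
        refine Finset.sum_eq_zero fun i _ => ?_
        rcases i.2 with ⟨hS, hR⟩ | ⟨hS, hR⟩
        · refine chi_eq_zero ⟨fun h => ?_, fun h => ?_⟩
          · have := hU1 (le_trans hS.1 h); linarith [hR.2]
          · have := hU1 (le_trans hR.1 h); linarith [hS.2]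
        · refine chi_eq_zero ⟨fun h => ?_, fun h => ?_⟩
          · have := hU2 (le_trans hS.1 h); linarith [hR.2]
          · have := hU2 (le_trans hR.1 h); linarith [hS.2]
      rw [hz, abs_zero]
      have hn1 : (0:ℝ) ≤ ind1 t := Set.indicator_nonneg (fun _ _ => zero_le_one) t
      have hn2 : (0:ℝ) ≤ ind2 t := Set.indicator_nonneg (fun _ _ => zero_le_one) t
      have hn3 : (0:ℝ) ≤ |g2 t| := abs_nonneg _
      nlinarith
  -- integrate the key inequality
  have hint : (∫ t, |g1 t|) ≤ (∫ t, |g2 t|) + c * (2 * (ε * Δ) + 2 * (ε * Δ)) := by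
    have hii : Integrable (fun t => ind1 t + ind2 t) := by
      rw [hind1, hind2]
      exact (integrable_indicator_Icc _ _).add (integrable_indicator_Icc _ _)
    have hrhs : Integrable (fun t => |g2 t| + c * (ind1 t + ind2 t)) :=
      hg2i.abs.add (hii.const_mul c)
    have h := integral_mono hg1i.abs hrhs hkey
    rw [integral_add hg2i.abs (hii.const_mul c), integral_const_mul] at h
    have hI : (∫ t, (ind1 t + ind2 t)) = 2 * (ε * Δ) + 2 * (ε * Δ) := by
      rw [hind1, hind2,
        integral_add (integrable_indicator_Icc _ _) (integrable_indicator_Icc _ _),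
        integral_indicator_Icc _ _ (by linarith), integral_indicator_Icc _ _ (by nlinarith)]
      ring
    rw [hI] at h
    exact h
  -- conclusion
  have hbdd : BddBelow (Set.range fun μ : Equiv.Perm {i : Fin n // isCloseEdge n s r ε Δ π i} =>
      ∑ i : {i : Fin n // isCloseEdge n s r ε Δ π i}, |s (π (μ i).1) - r i.1|) := by
    refine ⟨0, ?_⟩
    rintro x ⟨μ, rfl⟩
    exact Finset.sum_nonneg fun i _ => abs_nonneg _
  refine le_ciInf fun μ => ?_
  have h1 := ciInf_le hbdd ν
  rw [hν] at h1
  have h2 := hlow μ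
  have h3 : 4 * ε * Δ * c = c * (2 * (ε * Δ) + 2 * (ε * Δ)) := by ring
  linarith
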